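/- Let M^I = ⊕_{i=1}^{m^I} J_{c_i} with c_1 ≥ ... ≥ c_{m^I} and N^I = ⊕_{j=1}^{n^I} J_{f_j} with f_1 ≥ ... ≥ f_{n^I} be preinjective Kronecker representations over an algebraically closed field. Define u_1 = max{j : c_j > f_1}, v_l = max{i : c_{u_l+1} ≤ f_i}, u_l = max{j : c_j > f_{v_{l−1}+1}}, with u_w = m^I. Then N^I embeds as a subrepresentation of M^I if and only if v_{w−1} = v_w = n^I and for all 0 ≤ i ≤ w−2: Σ_{j=v_i+1}^{v_{w−1}} f_j ≤ Σ_{j=u_{i+1}+1}^{u_w} c_j and Σ_{j=v_i+1}^{v_{w−1}} (f_j − 1) ≤ Σ_{j=u_{i+1}+1}^{u_w} (c_j − 1). -/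

import Mathlib

open Matrix

def JsumA (K : Type*) [Field K] (m : ℕ) (c : ℕ → ℕ) :
    Matrix (Σ i : Fin m, Fin (c (i.1 + 1) - 1)) (Σ i : Fin m, Fin (c (i.1 + 1))) K :=
  fun x y => if x.1 = y.1 ∧ (x.2 : ℕ) = (y.2 : ℕ) then 1 else 0

def JsumB (K : Type*) [Field K] (m : ℕ) (c : ℕ → ℕ) :
    Matrix (Σ i : Fin m, Fin (c (i.1 + 1) - 1)) (Σ i : Fin m, Fin (c (i.1 + 1))) K :=
  fun x y => if x.1 = y.1 ∧ (y.2 : ℕ) = (x.2 : ℕ) + 1 then 1 else 0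

namespace KronAux

lemma supIcc (k : ℕ) : (Finset.Icc 1 k).sup id = k := by
  rcases Nat.eq_zero_or_pos k with h | h
  · subst h; simp
  · refine le_antisymm (Finset.sup_le fun b hb => (Finset.mem_Icc.mp hb).2) ?_
    exact Finset.le_sup (f := id) (Finset.mem_Icc.mpr ⟨h, le_rfl⟩)

lemma sup_attain {s : Finset ℕ} {p : ℕ → Prop} [DecidablePred p]
    (h : 1 ≤ (s.filter p).sup id) :
    (s.filter p).sup id ∈ s ∧ p ((s.filter p).sup id) := by
  have hne : (s.filter p).Nonempty := by
    by_contra hc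
    rw [Finset.not_nonempty_iff_eq_empty] at hc
    rw [hc] at h; simp at h
  obtain ⟨b, hb, hbe⟩ := Finset.exists_mem_eq_sup _ hne id
  rw [hbe]
  simpa using Finset.mem_filter.mp hb

lemma le_sup_of_mem {s : Finset ℕ} {p : ℕ → Prop} [DecidablePred p] {a : ℕ}
    (ha : a ∈ s) (hpa : p a) : a ≤ (s.filter p).sup id :=
  Finset.le_sup (f := id) (Finset.mem_filter.mpr ⟨ha, hpa⟩)

section Products

variable {K : Type*} [Field K] {m n : ℕ} {c f : ℕ → ℕ}
variable (φ : Matrix (Σ i : Fin m, Fin (c (i.1 + 1))) (Σ j : Fin n, Fin (f (j.1 + 1))) K)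
variable (ψ : Matrix (Σ i : Fin m, Fin (c (i.1 + 1) - 1)) (Σ j : Fin n, Fin (f (j.1 + 1) - 1)) K)

lemma mulA_left (x : Σ i : Fin m, Fin (c (i.1 + 1) - 1)) (y : Σ j : Fin n, Fin (f (j.1 + 1))) :
    (JsumA K m c * φ) x y
      = φ ⟨x.1, ⟨x.2.1, lt_of_lt_of_le x.2.2 (Nat.sub_le _ _)⟩⟩ y := by
  rw [Matrix.mul_apply]
  rw [Fintype.sum_eq_single (⟨x.1, ⟨x.2.1, lt_of_lt_of_le x.2.2 (Nat.sub_le _ _)⟩⟩ :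
      Σ i : Fin m, Fin (c (i.1 + 1)))]
  · rw [JsumA]; simp
  · intro z hz
    rcases z with ⟨zi, zr⟩
    rw [JsumA]
    simp only []
    rw [if_neg, zero_mul]
    rintro ⟨h1, h2⟩
    apply hz
    subst h1
    exact congrArg (Sigma.mk x.1) (Fin.ext h2.symm)

lemma mulB_left (x : Σ i : Fin m, Fin (c (i.1 + 1) - 1)) (y : Σ j : Fin n, Fin (f (j.1 + 1))) :
    (JsumB K m c * φ) x y
      = φ ⟨x.1, ⟨x.2.1 + 1, by have := x.2.2; omega⟩⟩ y := by
  rw [Matrix.mul_apply]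
  rw [Fintype.sum_eq_single (⟨x.1, ⟨x.2.1 + 1, by have := x.2.2; omega⟩⟩ :
      Σ i : Fin m, Fin (c (i.1 + 1)))]
  · rw [JsumB]; simp
  · intro z hz
    rcases z with ⟨zi, zr⟩
    rw [JsumB]
    simp only []
    rw [if_neg, zero_mul]
    rintro ⟨h1, h2⟩
    apply hz
    subst h1
    exact congrArg (Sigma.mk x.1) (Fin.ext h2)

lemma mulA_right (x : Σ i : Fin m, Fin (c (i.1 + 1) - 1)) (y : Σ j : Fin n, Fin (f (j.1 + 1))) :
    (ψ * JsumA K n f) x y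
      = if h : y.2.1 < f (y.1.1 + 1) - 1 then ψ x ⟨y.1, ⟨y.2.1, h⟩⟩ else 0 := by
  rw [Matrix.mul_apply]
  split
  · next h =>
    rw [Fintype.sum_eq_single (⟨y.1, ⟨y.2.1, h⟩⟩ : Σ j : Fin n, Fin (f (j.1 + 1) - 1))]
    · rw [JsumA]; simp
    · intro z hz
      rcases z with ⟨zi, zr⟩
      rw [JsumA]
      simp only []
      rw [if_neg, mul_zero]
      rintro ⟨h1, h2⟩
      apply hz
      subst h1
      exact congrArg (Sigma.mk y.1) (Fin.ext h2)
  · next h =>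
    apply Finset.sum_eq_zero
    intro z _
    rcases z with ⟨zi, zr⟩
    rw [JsumA]
    simp only []
    rw [if_neg, mul_zero]
    rintro ⟨h1, h2⟩
    apply h
    rw [← h2]
    subst h1
    exact zr.2

lemma mulB_right (x : Σ i : Fin m, Fin (c (i.1 + 1) - 1)) (y : Σ j : Fin n, Fin (f (j.1 + 1))) :
    (ψ * JsumB K n f) x y
      = if h : 1 ≤ y.2.1 then
          ψ x ⟨y.1, ⟨y.2.1 - 1, by have := y.2.2; omega⟩⟩ else 0 := by
  rw [Matrix.mul_apply]
  split
  · next h =>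
    rw [Fintype.sum_eq_single (⟨y.1, ⟨y.2.1 - 1, by have := y.2.2; omega⟩⟩ :
        Σ j : Fin n, Fin (f (j.1 + 1) - 1))]
    · rw [JsumB]
      simp only []
      rw [if_pos (⟨trivial, by omega⟩ : True ∧ (y.2:ℕ) = (y.2:ℕ) - 1 + 1), mul_one]
    · intro z hz
      rcases z with ⟨zi, zr⟩
      rw [JsumB]
      simp only []
      rw [if_neg, mul_zero]
      rintro ⟨h1, h2⟩
      apply hz
      subst h1
      refine congrArg (Sigma.mk y.1) (Fin.ext ?_)
      simp only []
      omega
  · next h =>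
    apply Finset.sum_eq_zero
    intro z _
    rcases z with ⟨zi, zr⟩
    rw [JsumB]
    simp only []
    rw [if_neg, mul_zero]
    rintro ⟨h1, h2⟩
    omega

section Rel

lemma relA (hA : JsumA K m c * φ = ψ * JsumA K n f) (i : Fin m) (r : Fin (c (i.1 + 1) - 1)) (y : Σ j : Fin n, Fin (f (j.1 + 1))) :
    φ ⟨i, ⟨r.1, lt_of_lt_of_le r.2 (Nat.sub_le _ _)⟩⟩ y
      = if h : y.2.1 < f (y.1.1 + 1) - 1 then ψ ⟨i, r⟩ ⟨y.1, ⟨y.2.1, h⟩⟩ else 0 := by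
  have h1 := congrFun (congrFun hA ⟨i, r⟩) y
  rw [mulA_left, mulA_right] at h1
  exact h1

lemma relB (hB : JsumB K m c * φ = ψ * JsumB K n f) (i : Fin m) (r : Fin (c (i.1 + 1) - 1)) (y : Σ j : Fin n, Fin (f (j.1 + 1))) :
    φ ⟨i, ⟨r.1 + 1, by have := r.2; omega⟩⟩ y
      = if h : 1 ≤ y.2.1 then
          ψ ⟨i, r⟩ ⟨y.1, ⟨y.2.1 - 1, by have := y.2.2; omega⟩⟩ else 0 := by
  have h1 := congrFun (congrFun hB ⟨i, r⟩) y
  rw [mulB_left, mulB_right] at h1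
  exact h1

/-- vanishing of morphism components into strictly bigger blocks -/
lemma vanishPhi (hA : JsumA K m c * φ = ψ * JsumA K n f)
    (hB : JsumB K m c * φ = ψ * JsumB K n f) (i : Fin m) (j : Fin n) (hlt : f (j.1 + 1) < c (i.1 + 1)) :
    ∀ (r : Fin (c (i.1 + 1))) (t : Fin (f (j.1 + 1))), φ ⟨i, r⟩ ⟨j, t⟩ = 0 := by
  set a := f (j.1 + 1) with ha
  set b := c (i.1 + 1) with hb
  -- diagonal step
  have diag : ∀ (r t : ℕ) (hr : r < b - 1) (ht : t < a - 1),
      φ ⟨i, ⟨r + 1, by omega⟩⟩ ⟨j, ⟨t + 1, by omega⟩⟩ = φ ⟨i, ⟨r, by omega⟩⟩ ⟨j, ⟨t, by omega⟩⟩ := by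
    intro r t hr ht
    have h2 := relB φ ψ hB i ⟨r, hr⟩ ⟨j, ⟨t + 1, by omega⟩⟩
    simp only [show (1:ℕ) ≤ t + 1 from by omega, dif_pos] at h2
    have h3 := relA φ ψ hA i ⟨r, hr⟩ ⟨j, ⟨t, by omega⟩⟩
    simp only [dif_pos (show t < f (j.1 + 1) - 1 from ht)] at h3
    rw [h2, h3]
    simp only [Nat.add_sub_cancel]
  -- top column vanishing
  have topv : ∀ (r : ℕ) (hr : r < b - 1) (ht : a - 1 < a),
      φ ⟨i, ⟨r, by omega⟩⟩ ⟨j, ⟨a - 1, ht⟩⟩ = 0 := by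
    intro r hr ht
    have h3 := relA φ ψ hA i ⟨r, hr⟩ ⟨j, ⟨a - 1, ht⟩⟩
    rw [dif_neg (show ¬(a - 1 < a - 1) by omega)] at h3
    exact h3
  -- bottom row vanishing
  have botv : ∀ (r : ℕ) (hr : r < b - 1) (h0 : 0 < a),
      φ ⟨i, ⟨r + 1, by omega⟩⟩ ⟨j, ⟨0, h0⟩⟩ = 0 := by
    intro r hr h0
    have h2 := relB φ ψ hB i ⟨r, hr⟩ ⟨j, ⟨0, h0⟩⟩
    rw [dif_neg (show ¬((1:ℕ) ≤ 0) by omega)] at h2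
    exact h2
  -- chase up-right: for r ≤ t
  have chase : ∀ (d r t : ℕ) (hr : r < b) (ht : t < a), a - 1 - t = d → r ≤ t →
      φ ⟨i, ⟨r, hr⟩⟩ ⟨j, ⟨t, ht⟩⟩ = 0 := by
    intro d
    induction d with
    | zero =>
      intro r t hr ht hd hrt
      have hta : t = a - 1 := by omega
      subst hta
      exact topv r (by omega) ht
    | succ d ih =>
      intro r t hr ht hd hrt
      have h1 : t < a - 1 := by omega
      have h2 : r < b - 1 := by omega
      have := diag r t h2 h1
      rw [this.symm]
      exact ih (r + 1) (t + 1) (by omega) (by omega) (by omega) (by omega)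
  -- chase down-left: all
  have chase2 : ∀ (t r : ℕ) (hr : r < b) (ht : t < a), t ≤ r →
      φ ⟨i, ⟨r, hr⟩⟩ ⟨j, ⟨t, ht⟩⟩ = 0 := by
    intro t
    induction t with
    | zero =>
      intro r hr ht h0
      rcases Nat.eq_zero_or_pos r with h | h
      · subst h; exact chase (a - 1) 0 0 hr ht rfl le_rfl
      · obtain ⟨r', rfl⟩ : ∃ r', r = r' + 1 := ⟨r - 1, by omega⟩
        exact botv r' (by omega) ht
    | succ t ih =>
      intro r hr ht h0
      obtain ⟨r', rfl⟩ : ∃ r', r = r' + 1 := ⟨r - 1, by omega⟩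
      have h2 : r' < b - 1 := by omega
      rcases Nat.lt_or_ge t (a - 1) with h1 | h1
      · rw [diag r' t h2 h1]
        exact ih r' (by omega) (by omega) (by omega)
      · -- t + 1 < a and t ≥ a - 1 impossible
        omega
  intro r t
  rcases le_or_gt r.1 t.1 with h | h
  · have := chase (a - 1 - t.1) r.1 t.1 r.2 t.2 rfl h
    convert this using 2
  · have := chase2 t.1 r.1 r.2 t.2 (by omega)
    convert this using 2

lemma vanishPsi (hA : JsumA K m c * φ = ψ * JsumA K n f)
    (hB : JsumB K m c * φ = ψ * JsumB K n f) (i : Fin m) (j : Fin n) (hlt : f (j.1 + 1) < c (i.1 + 1)) :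
    ∀ (r : Fin (c (i.1 + 1) - 1)) (t : Fin (f (j.1 + 1) - 1)), ψ ⟨i, r⟩ ⟨j, t⟩ = 0 := by
  intro r t
  have h3 := relA φ ψ hA i r ⟨j, ⟨t.1, lt_of_lt_of_le t.2 (Nat.sub_le _ _)⟩⟩
  rw [dif_pos t.2] at h3
  rw [← h3]
  exact vanishPhi φ ψ hA hB i j hlt _ _

end Rel

end Products

section Counting

lemma cardTail (n : ℕ) (F : ℕ → ℕ) (p : ℕ) :
    Fintype.card {y : Σ j : Fin n, Fin (F (j.1+1)) // p ≤ y.1.1} 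
      = ∑ j ∈ Finset.Icc (p+1) n, F j := by
  classical
  rw [Fintype.card_subtype]
  rw [Finset.card_filter, ← Finset.univ_sigma_univ, Finset.sum_sigma]
  have h1 : ∀ a : Fin n, (∑ _b : Fin (F (a.1+1)), if p ≤ a.1 then 1 else 0)
      = if p ≤ a.1 then F (a.1+1) else 0 := by
    intro a
    split
    · simp
    · simp
  rw [Finset.sum_congr rfl (fun a _ => h1 a)]
  rw [Fin.sum_univ_eq_sum_range (fun k => if p ≤ k then F (k+1) else 0) n]
  rw [← Finset.sum_filter]
  have h2 : (Finset.range n).filter (fun k => p ≤ k) = Finset.Ico p n := by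
    ext k; simp [Finset.mem_filter, Finset.mem_Ico]; omega
  rw [h2]
  apply Finset.sum_nbij' (fun k => k + 1) (fun k => k - 1)
  · intro a ha; simp only [Finset.mem_Ico] at ha; simp only [Finset.mem_Icc]; omega
  · intro a ha; simp only [Finset.mem_Icc] at ha; simp only [Finset.mem_Ico]; omega
  · intro a ha; simp only [Finset.mem_Ico] at ha; omega
  · intro a ha; simp only [Finset.mem_Icc] at ha; omega
  · intro a _; rfl

/-- generic counting: injectivity plus a block-triangular vanishing pattern
gives the dimension inequality -/
lemma countNec {K : Type*} [Field K] (m n : ℕ) (C F : ℕ → ℕ)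
    (M : Matrix (Σ i : Fin m, Fin (C (i.1+1))) (Σ j : Fin n, Fin (F (j.1+1))) K)
    (hinj : Function.Injective M.mulVecLin) (p q : ℕ)
    (hvan : ∀ (z : Σ i : Fin m, Fin (C (i.1+1))) (y : Σ j : Fin n, Fin (F (j.1+1))),
      z.1.1 + 1 ≤ q → p ≤ y.1.1 → M z y = 0) :
    ∑ j ∈ Finset.Icc (p+1) n, F j ≤ ∑ i ∈ Finset.Icc (q+1) m, C i := by
  classical
  rw [← cardTail n F p, ← cardTail m C q]
  set S := {y : Σ j : Fin n, Fin (F (j.1+1)) // p ≤ y.1.1}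
  set T := {z : Σ i : Fin m, Fin (C (i.1+1)) // q ≤ z.1.1}
  have main : LinearIndependent K (fun (y : S) => (fun (z : T) => M z.1 y.1 : T → K)) := by
    rw [Fintype.linearIndependent_iff]
    intro g hg
    -- extend g by zero
    set g' : (Σ j : Fin n, Fin (F (j.1+1))) → K :=
      fun y => if h : p ≤ y.1.1 then g ⟨y, h⟩ else 0 with hg'
    have hmv : M.mulVecLin g' = 0 := by
      funext z
      rw [Matrix.mulVecLin_apply]
      show (∑ y, M z y * g' y) = (0 : (Σ i : Fin m, Fin (C (i.1+1))) → K) z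
      by_cases hz : q ≤ z.1.1
      · have := congrFun hg ⟨z, hz⟩
        simp only [Finset.sum_apply, Pi.smul_apply, smul_eq_mul, Pi.zero_apply] at this ⊢
        rw [← this]
        rw [← Fintype.sum_subtype_add_sum_subtype (fun y => p ≤ y.1.1) (fun y => M z y * g' y)]
        have hz2 : (∑ y : {y // ¬ p ≤ y.1.1}, M z y.1 * g' y.1) = 0 := by
          apply Finset.sum_eq_zero
          intro y _
          have : g' y.1 = 0 := by rw [hg']; exact dif_neg y.2
          rw [this, mul_zero]
        rw [hz2, add_zero]
        apply Finset.sum_congr rfl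
        intro y _
        have : g' y.1 = g y := by rw [hg']; exact dif_pos y.2
        rw [this, mul_comm]
      · apply Finset.sum_eq_zero
        intro y _
        by_cases hy : p ≤ y.1.1
        · rw [hvan z y (by omega) hy, zero_mul]
        · have : g' y = 0 := by rw [hg']; exact dif_neg hy
          rw [this, mul_zero]
    have : g' = 0 := hinj (by rw [hmv]; exact (map_zero _).symm)
    intro y
    have := congrFun this y.1
    rw [hg'] at this
    simpa [dif_pos y.2] using this
  have := main.fintype_card_le_finrank
  simpa using this

end Counting

section Necessity

variable {K : Type*} [Field K]

lemma notInj (m n : ℕ) (C F : ℕ → ℕ)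
    (M : Matrix (Σ i : Fin m, Fin (C (i.1+1))) (Σ j : Fin n, Fin (F (j.1+1))) K)
    (y₀ : Σ j : Fin n, Fin (F (j.1+1))) (hcol : ∀ z, M z y₀ = 0) :
    ¬ Function.Injective M.mulVecLin := by
  classical
  intro hinj
  set x : (Σ j : Fin n, Fin (F (j.1+1))) → K := Pi.single y₀ 1 with hx
  have hmv : M.mulVecLin x = 0 := by
    funext z
    rw [Matrix.mulVecLin_apply]
    show (∑ y, M z y * x y) = 0
    rw [Fintype.sum_eq_single y₀]
    · rw [hcol z, zero_mul]
    · intro y hy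
      rw [hx]
      rw [Pi.single_eq_of_ne hy, mul_zero]
  have hx0 : x = 0 := hinj (by rw [hmv]; exact (map_zero _).symm)
  have := congrFun hx0 y₀
  rw [hx, Pi.single_eq_same] at this
  exact one_ne_zero this

variable (m n : ℕ) (c f : ℕ → ℕ)
    (hc_pos : ∀ j, 1 ≤ j → j ≤ m → 1 ≤ c j)
    (hc_mono : ∀ i j, 1 ≤ i → i ≤ j → j ≤ m → c j ≤ c i)
    (hc_zero : ∀ j, m < j → c j = 0)
    (hf_pos : ∀ j, 1 ≤ j → j ≤ n → 1 ≤ f j)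
    (hf_mono : ∀ i j, 1 ≤ i → i ≤ j → j ≤ n → f j ≤ f i)
    (hf_zero : ∀ j, n < j → f j = 0)
    (u v : ℕ → ℕ) (hv0 : v 0 = 0)
    (hu : ∀ l, 1 ≤ l → u l =
      ((Finset.Icc 1 m).filter (fun j => f (v (l - 1) + 1) < c j)).sup id)
    (hv : ∀ l, 1 ≤ l → v l =
      ((Finset.Icc 1 n).filter (fun i => c (u l + 1) ≤ f i)).sup id)
    (w : ℕ) (hw1 : 1 ≤ w) (hwu : u w = m) (hwmin : ∀ l, 1 ≤ l → l < w → u l ≠ m)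

section NecMain
set_option linter.unusedSectionVars false

variable (φ : Matrix (Σ i : Fin m, Fin (c (i.1 + 1))) (Σ j : Fin n, Fin (f (j.1 + 1))) K)
variable (ψ : Matrix (Σ i : Fin m, Fin (c (i.1 + 1) - 1)) (Σ j : Fin n, Fin (f (j.1 + 1) - 1)) K)

include hc_pos hc_mono hc_zero hf_pos hf_mono hf_zero hv0 hu hv hw1 hwu hwmin in
theorem necessity
    (hφ : Function.Injective φ.mulVecLin) (hψ : Function.Injective ψ.mulVecLin)
    (hA : JsumA K m c * φ = ψ * JsumA K n f) (hB : JsumB K m c * φ = ψ * JsumB K n f) :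
    (v (w - 1) = n ∧ v w = n ∧ ∀ i, i + 2 ≤ w →
      (∑ j ∈ Finset.Icc (v i + 1) (v (w - 1)), f j ≤
        ∑ j ∈ Finset.Icc (u (i + 1) + 1) (u w), c j) ∧
      (∑ j ∈ Finset.Icc (v i + 1) (v (w - 1)), (f j - 1) ≤
        ∑ j ∈ Finset.Icc (u (i + 1) + 1) (u w), (c j - 1))) := by
  classical
  -- v w = n
  have hvw : v w = n := by
    rw [hv w hw1]
    have : (Finset.Icc 1 n).filter (fun i => c (u w + 1) ≤ f i) = Finset.Icc 1 n := by
      apply Finset.filter_true_of_mem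
      intro i _
      rw [hwu, hc_zero (m+1) (by omega)]
      omega
    rw [this, supIcc]
  -- the key vanishing tool : all blocks of c bigger than some bound kill columns
  have colvan : ∀ (jj : ℕ) (hj1 : 1 ≤ jj) (hj2 : jj ≤ n)
      (hbig : ∀ ii, 1 ≤ ii → ii ≤ m → f jj < c ii),
      ∀ (z : Σ i : Fin m, Fin (c (i.1 + 1))) (t : Fin (f ((jj:ℕ) - 1 + 1))),
        φ z ⟨⟨jj - 1, by omega⟩, t⟩ = 0 := by
    intro jj hj1 hj2 hbig z t
    rcases z with ⟨zi, zr⟩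
    have hzi := zi.2
    have h1 : f ((⟨jj - 1, by omega⟩ : Fin n).1 + 1) < c (zi.1 + 1) := by
      have h2 : ((⟨jj - 1, by omega⟩ : Fin n).1 + 1) = jj := by simp; omega
      rw [h2]
      exact hbig (zi.1+1) (by omega) (by omega)
    exact vanishPhi φ ψ hA hB zi _ h1 zr t
  -- v (w-1) = n
  have hvw1 : v (w - 1) = n := by
    rcases Nat.lt_or_ge w 2 with hw2 | hw2
    · -- w = 1
      have hw : w = 1 := by omega
      rw [hw]; simp only [Nat.sub_self, hv0]
      by_contra hn
      have hn1 : 1 ≤ n := by omega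
      -- all c blocks are bigger than f 1 ≥ every f
      have hbig : ∀ ii, 1 ≤ ii → ii ≤ m → f 1 < c ii := by
        intro ii h1 h2
        have hm1 : 1 ≤ m := by omega
        have hum : u 1 = m := by rw [← hw]; exact hwu
        have := sup_attain (p := fun j => f (v (1-1) + 1) < c j)
          (s := Finset.Icc 1 m) (by rw [← hu 1 le_rfl, hum]; omega)
        rw [← hu 1 le_rfl, hum] at this
        simp only [Nat.sub_self, hv0] at this
        calc f 1 < c m := this.2
        _ ≤ c ii := hc_mono ii m h1 h2 le_rfl
      exact absurd hφ (notInj m n c f φ ⟨⟨0, by omega⟩, ⟨0, by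
          simpa using Nat.lt_of_lt_of_le Nat.zero_lt_one (hf_pos 1 le_rfl hn1)⟩⟩
        (fun z => by
          have := colvan 1 le_rfl hn1 (fun ii a b => hbig ii a b) z
          simpa using this ⟨0, by simpa using Nat.lt_of_lt_of_le Nat.zero_lt_one (hf_pos 1 le_rfl hn1)⟩))
    · -- w ≥ 2
      have hw11 : 1 ≤ w - 1 := by omega
      have hle : v (w-1) ≤ n := by
        rw [hv (w-1) hw11]
        apply Finset.sup_le
        intro b hb
        exact (Finset.mem_Icc.mp (Finset.mem_filter.mp hb).1).2
      rcases Nat.eq_zero_or_pos n with hn0 | hn1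
      · omega
      by_contra hne
      have hlt : v (w - 1) < n := by omega
      have hbig : ∀ ii, 1 ≤ ii → ii ≤ m → f n < c ii := by
        intro ii h1 h2
        have hm1 : 1 ≤ m := by omega
        have := sup_attain (p := fun j => f (v (w - 1) + 1) < c j)
          (s := Finset.Icc 1 m) (by rw [← hu w hw1, hwu]; omega)
        rw [← hu w hw1, hwu] at this
        calc f n ≤ f (v (w-1) + 1) := hf_mono (v (w-1) + 1) n (by omega) (by omega) le_rfl
        _ < c m := this.2
        _ ≤ c ii := hc_mono ii m h1 h2 le_rfl
      exact absurd hφ (notInj m n c f φ ⟨⟨n - 1, by omega⟩, ⟨0, by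
          have : n - 1 + 1 = n := by omega
          simp only [this]; exact hf_pos n hn1 le_rfl⟩⟩
        (fun z => by
          have := colvan n hn1 le_rfl (fun ii a b => hbig ii a b) z
          exact this ⟨0, by
            have : n - 1 + 1 = n := by omega
            simp only [this]; exact hf_pos n hn1 le_rfl⟩))
  refine ⟨hvw1, hvw, ?_⟩
  intro i hi
  rw [hvw1, hwu]
  have hq := hu (i+1) (by omega)
  simp only [Nat.add_sub_cancel] at hq
  -- blocks with index ≤ u (i+1) are all bigger than f (v i + 1)
  have hbig : ∀ ii, 1 ≤ ii → ii ≤ u (i+1) → f (v i + 1) < c ii := by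
    intro ii h1 h2
    have hq1 : 1 ≤ u (i+1) := by omega
    have := sup_attain (p := fun j => f (v i + 1) < c j)
      (s := Finset.Icc 1 m) (by rw [← hq]; omega)
    rw [← hq] at this
    have hmem := Finset.mem_Icc.mp this.1
    calc f (v i + 1) < c (u (i+1)) := this.2
    _ ≤ c ii := hc_mono ii (u (i+1)) h1 h2 hmem.2
  have hvin : v i ≤ n := by
    rcases Nat.eq_zero_or_pos i with h0 | h0
    · subst h0; rw [hv0]; omega
    · rw [hv i h0]
      apply Finset.sup_le
      intro b hb
      exact (Finset.mem_Icc.mp (Finset.mem_filter.mp hb).1).2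
  constructor
  · apply countNec m n c f φ hφ (v i) (u (i+1))
    intro z y hz hy
    rcases Nat.eq_or_lt_of_le hy with heq | hlt2
    all_goals {
      apply vanishPhi φ ψ hA hB
      calc f (y.1.1 + 1) ≤ f (v i + 1) :=
        hf_mono (v i + 1) (y.1.1 + 1) (by omega) (by omega) (by omega)
      _ < c (z.1.1 + 1) := hbig (z.1.1+1) (by omega) (by omega)
    }
  · apply countNec m n (fun k => c k - 1) (fun k => f k - 1) ψ hψ (v i) (u (i+1))
    intro z y hz hy
    apply vanishPsi φ ψ hA hB
    calc f (y.1.1 + 1) ≤ f (v i + 1) :=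
      hf_mono (v i + 1) (y.1.1 + 1) (by omega) (by omega) (by omega)
    _ < c (z.1.1 + 1) := hbig (z.1.1+1) (by omega) (by omega)

end NecMain

end Necessity

section Sufficiency

variable (m n : ℕ) (c f : ℕ → ℕ)

/-- cells strictly below block `i` (blocks are numbered `1..m`, deeper = larger index) -/
def csum (i : ℕ) : ℕ := ∑ ι ∈ Finset.Icc (i+1) m, (c ι - 1)

/-- cells strictly below run `j` -/
def psum (j : ℕ) : ℕ := ∑ ι ∈ Finset.Icc (j+1) n, (f ι - 1)

/-- the block containing cell `p` -/
def blkOf (p : ℕ) : ℕ := ((Finset.Icc 1 m).filter (fun i => p < csum m c (i-1))).sup id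

/-- window shift of block `i` inside run `j` -/
def shiftA (i j : ℕ) : ℕ := min (csum m c i - psum n f j) (f j - c i)

/-- largest index with `f ≥ 2` -/
def qF : ℕ := ((Finset.Icc 1 n).filter (fun j => 2 ≤ f j)).sup id

def QC : ℕ := ((Finset.Icc 1 m).filter (fun i => 2 ≤ c i)).sup id

/-- main entries: windows -/
def isE (i j r t : ℕ) : Prop :=
  c i ≤ f j ∧ csum m c i < psum n f j + (f j - 1) ∧ psum n f j < csum m c i + (c i - 1) ∧
    t = r + shiftA m n c f i j

/-- matching entries for the size-one blocks -/
def isM (i j r t : ℕ) : Prop :=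
  f j = 1 ∧ c i = 1 ∧ i = m - (n - j) ∧ qF n f < j ∧ r = 0 ∧ t = 0

instance (i j r t : ℕ) : Decidable (isE m n c f i j r t) := by
  unfold isE; infer_instance

instance (i j r t : ℕ) : Decidable (isM m n c f i j r t) := by
  unfold isM; infer_instance

def Ent (i j r t : ℕ) : Prop := isE m n c f i j r t ∨ isM m n c f i j r t

instance (i j r t : ℕ) : Decidable (Ent m n c f i j r t) := by
  unfold Ent; infer_instance

variable (K : Type*) [Field K]

/-- generic 0/1 matrix from an entry predicate -/
def pMat (mm nn : ℕ) (CC FF : ℕ → ℕ) (P : ℕ → ℕ → ℕ → ℕ → Prop)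
    [∀ i j r t, Decidable (P i j r t)] :
    Matrix (Σ i : Fin mm, Fin (CC (i.1 + 1))) (Σ j : Fin nn, Fin (FF (j.1 + 1))) K :=
  fun x y => if P (x.1.1+1) (y.1.1+1) x.2.1 y.2.1 then 1 else 0

def bigPhi : Matrix (Σ i : Fin m, Fin (c (i.1 + 1))) (Σ j : Fin n, Fin (f (j.1 + 1))) K :=
  pMat K m n c f (Ent m n c f)

def bigPsi : Matrix (Σ i : Fin m, Fin (c (i.1 + 1) - 1)) (Σ j : Fin n, Fin (f (j.1 + 1) - 1)) K :=
  pMat K m n (fun k => c k - 1) (fun k => f k - 1) (isE m n c f)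

section Basic

variable {m n c f}

lemma csum_anti {i i' : ℕ} (h : i ≤ i') : csum m c i' ≤ csum m c i := by
  apply Finset.sum_le_sum_of_subset
  intro a ha
  simp only [Finset.mem_Icc] at *
  omega

lemma csum_succ {i : ℕ} (h1 : 1 ≤ i) (h2 : i ≤ m) :
    csum m c (i-1) = csum m c i + (c i - 1) := by
  unfold csum
  have : Finset.Icc (i-1+1) m = insert i (Finset.Icc (i+1) m) := by
    ext a
    simp only [Finset.mem_Icc, Finset.mem_insert]
    omega
  rw [this, Finset.sum_insert (by simp only [Finset.mem_Icc]; omega)]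
  ring

lemma psum_succ {j : ℕ} (h1 : 1 ≤ j) (h2 : j ≤ n) :
    psum n f (j-1) = psum n f j + (f j - 1) := by
  unfold psum
  have : Finset.Icc (j-1+1) n = insert j (Finset.Icc (j+1) n) := by
    ext a
    simp only [Finset.mem_Icc, Finset.mem_insert]
    omega
  rw [this, Finset.sum_insert (by simp only [Finset.mem_Icc]; omega)]
  ring

lemma psum_anti {j j' : ℕ} (h : j ≤ j') : psum n f j' ≤ psum n f j := by
  apply Finset.sum_le_sum_of_subset
  intro a ha
  simp only [Finset.mem_Icc] at *
  omega

/-- characterization of `blkOf` -/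
lemma blkOf_spec {p : ℕ} (hp : p < csum m c 0) :
    1 ≤ blkOf m c p ∧ blkOf m c p ≤ m ∧ csum m c (blkOf m c p) ≤ p ∧
      p < csum m c (blkOf m c p - 1) := by
  have hm : 1 ≤ m := by
    by_contra hm
    have : m = 0 := by omega
    rw [this] at hp
    unfold csum at hp
    simp at hp
  have h1 : 1 ∈ (Finset.Icc 1 m).filter (fun i => p < csum m c (i-1)) := by
    simp only [Finset.mem_filter, Finset.mem_Icc]
    exact ⟨⟨le_rfl, hm⟩, by simpa using hp⟩
  have hpos : 1 ≤ blkOf m c p := le_sup_of_mem (Finset.mem_Icc.mpr ⟨le_rfl, hm⟩) (by simpa using hp)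
  obtain ⟨hmem, hprop⟩ := sup_attain (s := Finset.Icc 1 m)
    (p := fun i => p < csum m c (i-1)) hpos
  have hle : blkOf m c p ≤ m := (Finset.mem_Icc.mp hmem).2
  refine ⟨hpos, hle, ?_, hprop⟩
  -- csum (blkOf p) ≤ p
  by_contra hc
  push_neg at hc
  rcases Nat.lt_or_ge (blkOf m c p) m with h | h
  · have : blkOf m c p + 1 ≤ blkOf m c p :=
      le_sup_of_mem (Finset.mem_Icc.mpr ⟨by omega, by omega⟩) (by simpa using hc)
    omega
  · have : blkOf m c p = m := by omega
    rw [this] at hc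
    unfold csum at hc
    simp at hc

lemma blkOf_uniq {p i : ℕ} (h1 : 1 ≤ i) (h2 : i ≤ m) (h3 : csum m c i ≤ p)
    (h4 : p < csum m c (i-1)) : blkOf m c p = i := by
  have hp : p < csum m c 0 := lt_of_lt_of_le h4 (csum_anti (by omega))
  obtain ⟨b1, b2, b3, b4⟩ := blkOf_spec hp
  have hge : i ≤ blkOf m c p := le_sup_of_mem (Finset.mem_Icc.mpr ⟨h1, h2⟩) (by simpa using h4)
  rcases Nat.lt_or_ge i (blkOf m c p) with h | h
  · exfalso
    have : csum m c (blkOf m c p - 1) ≤ csum m c i := csum_anti (by omega)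
    omega
  · omega

end Basic

section Intertwine

variable {m n : ℕ} {c f : ℕ → ℕ} {K : Type*} [Field K]

lemma bigA (hc_pos : ∀ j, 1 ≤ j → j ≤ m → 1 ≤ c j) :
    JsumA K m c * bigPhi m n c f K = bigPsi m n c f K * JsumA K n f := by
  funext x y
  rw [mulA_left, mulA_right]
  rcases x with ⟨xi, xr⟩
  rcases y with ⟨yj, yt⟩
  have hxr := xr.2
  have hyt := yt.2
  have hxm := xi.2
  unfold bigPhi bigPsi pMat
  dsimp only
  split
  · next h =>
    have he : isE m n c f (xi.1+1) (yj.1+1) xr.1 yt.1 := by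
      rcases h with he | hm
      · exact he
      · exfalso
        obtain ⟨_, hc1, _, _, hr0, _⟩ := hm
        omega
    obtain ⟨hcf, hi1, hi2, hT⟩ := he
    have hA : shiftA m n c f (xi.1+1) (yj.1+1) ≤ f (yj.1+1) - c (xi.1+1) :=
      min_le_right _ _
    have hE : isE m n c f (xi.1+1) (yj.1+1) xr.1 yt.1 := ⟨hcf, hi1, hi2, hT⟩
    rw [dif_pos (by omega : (yt:ℕ) < f (yj.1+1) - 1), if_pos hE]
  · next h =>
    split
    · rw [if_neg (fun he => h (Or.inl he))]
    · rfl

lemma bigB : JsumB K m c * bigPhi m n c f K = bigPsi m n c f K * JsumB K n f := by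
  funext x y
  rw [mulB_left, mulB_right]
  rcases x with ⟨xi, xr⟩
  rcases y with ⟨yj, yt⟩
  have hxr := xr.2
  have hyt := yt.2
  unfold bigPhi bigPsi pMat
  dsimp only
  split
  · next h =>
    have he : isE m n c f (xi.1+1) (yj.1+1) (xr.1+1) yt.1 := by
      rcases h with he | hm
      · exact he
      · exfalso
        obtain ⟨_, _, _, _, hr0, _⟩ := hm
        omega
    obtain ⟨hcf, hi1, hi2, hT⟩ := he
    have hE : isE m n c f (xi.1+1) (yj.1+1) xr.1 (yt.1-1) := ⟨hcf, hi1, hi2, by omega⟩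
    rw [dif_pos (by omega : 1 ≤ (yt:ℕ)), if_pos hE]
  · next h =>
    split
    · next h1 =>
      rw [if_neg]
      rintro ⟨h2, h3, h4, hT⟩
      exact h (Or.inl ⟨h2, h3, h4, by omega⟩)
    · rfl

end Intertwine

section Rows

variable {K : Type*} [Field K]

lemma sigEq {nn : ℕ} {FF : ℕ → ℕ} (a b : Σ j : Fin nn, Fin (FF (j.1+1)))
    (h1 : a.1.1 = b.1.1) (h2 : a.2.1 = b.2.1) : a = b := by
  rcases a with ⟨⟨a1, ha1⟩, a2⟩
  rcases b with ⟨⟨b1, hb1⟩, b2⟩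
  simp only at h1
  subst h1
  simp only at h2
  exact congrArg (Sigma.mk _) (Fin.ext h2)

/-- total entry-reading function for a vector indexed by the sigma type -/
def xval (nn : ℕ) (FF : ℕ → ℕ) (x : (Σ j : Fin nn, Fin (FF (j.1+1))) → K) (j t : ℕ) : K :=
  if h : j - 1 < nn ∧ t < FF (j - 1 + 1) then x ⟨⟨j-1, h.1⟩, ⟨t, h.2⟩⟩ else 0

lemma xval_eq {nn : ℕ} {FF : ℕ → ℕ} (x : (Σ j : Fin nn, Fin (FF (j.1+1))) → K)
    (y : Σ j : Fin nn, Fin (FF (j.1+1))) : x y = xval nn FF x (y.1.1+1) y.2.1 := by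
  rcases y with ⟨⟨j, hj⟩, ⟨t, ht⟩⟩
  rw [xval, dif_pos]
  · rfl
  · constructor
    · simpa using hj
    · simpa using ht

lemma xval_zero {nn : ℕ} {FF : ℕ → ℕ} (x : (Σ j : Fin nn, Fin (FF (j.1+1))) → K)
    {j t : ℕ} (h : ¬ (j - 1 < nn ∧ t < FF (j - 1 + 1))) : xval nn FF x j t = 0 := by
  rw [xval, dif_neg h]

section RowMain

variable (mm nn : ℕ) (CC FF : ℕ → ℕ) (P : ℕ → ℕ → ℕ → ℕ → Prop)
  [∀ i j r t, Decidable (P i j r t)]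
  (x : (Σ j : Fin nn, Fin (FF (j.1+1))) → K)

lemma rowU (hx : ∀ z, ∑ y, pMat K mm nn CC FF P z y * x y = 0) (i r j t : ℕ) (hi1 : 1 ≤ i) (him : i ≤ mm) (hr : r < CC i)
    (hj1 : 1 ≤ j) (hjn : j ≤ nn) (ht : t < FF j)
    (hent : P i j r t)
    (huniq : ∀ j' t', 1 ≤ j' → j' ≤ nn → t' < FF j' → P i j' r t' → j' = j ∧ t' = t) :
    xval nn FF x j t = 0 := by
  have ei : i - 1 + 1 = i := by omega
  have ej : j - 1 + 1 = j := by omega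
  set z : Σ i : Fin mm, Fin (CC (i.1+1)) :=
    ⟨⟨i-1, by omega⟩, ⟨r, by rw [ei]; exact hr⟩⟩ with hz
  set y₀ : Σ j : Fin nn, Fin (FF (j.1+1)) :=
    ⟨⟨j-1, by omega⟩, ⟨t, by rw [ej]; exact ht⟩⟩ with hy₀
  have h := hx z
  rw [Fintype.sum_eq_single y₀] at h
  · rw [show pMat K mm nn CC FF P z y₀ = 1 from ?_, one_mul] at h
    · rw [← h, xval, dif_pos ⟨by omega, by rw [ej]; exact ht⟩]
    · rw [pMat, if_pos]
      show P (z.1.1+1) (y₀.1.1+1) z.2.1 y₀.2.1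
      rw [hz, hy₀]
      dsimp only
      rw [ei, ej]
      exact hent
  · intro y hy
    by_cases hP : P (z.1.1+1) (y.1.1+1) z.2.1 y.2.1
    · exfalso
      apply hy
      have hb := y.2.2
      rw [hz] at hP
      dsimp only at hP
      rw [ei] at hP
      obtain ⟨e1, e2⟩ := huniq (y.1.1+1) y.2.1 (by omega) (by have := y.1.2; omega)
        hb hP
      apply sigEq
      · rw [hy₀]; dsimp only; omega
      · rw [hy₀]; dsimp only; omega
    · rw [pMat, if_neg hP, zero_mul]

lemma row2 (hx : ∀ z, ∑ y, pMat K mm nn CC FF P z y * x y = 0) (i r j₁ t₁ j₂ t₂ : ℕ) (hi1 : 1 ≤ i) (him : i ≤ mm) (hr : r < CC i)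
    (hj1 : 1 ≤ j₁) (hjn : j₁ ≤ nn) (ht1 : t₁ < FF j₁)
    (hj2 : 1 ≤ j₂) (hjn2 : j₂ ≤ nn) (ht2 : t₂ < FF j₂)
    (hjne : j₁ ≠ j₂)
    (hent1 : P i j₁ r t₁) (hent2 : P i j₂ r t₂)
    (huniq : ∀ j' t', 1 ≤ j' → j' ≤ nn → t' < FF j' → P i j' r t' →
      (j' = j₁ ∧ t' = t₁) ∨ (j' = j₂ ∧ t' = t₂)) :
    xval nn FF x j₁ t₁ + xval nn FF x j₂ t₂ = 0 := by
  have ei : i - 1 + 1 = i := by omega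
  have ej1 : j₁ - 1 + 1 = j₁ := by omega
  have ej2 : j₂ - 1 + 1 = j₂ := by omega
  set z : Σ i : Fin mm, Fin (CC (i.1+1)) :=
    ⟨⟨i-1, by omega⟩, ⟨r, by rw [ei]; exact hr⟩⟩ with hz
  set y₁ : Σ j : Fin nn, Fin (FF (j.1+1)) :=
    ⟨⟨j₁-1, by omega⟩, ⟨t₁, by rw [ej1]; exact ht1⟩⟩ with hy₁
  set y₂ : Σ j : Fin nn, Fin (FF (j.1+1)) :=
    ⟨⟨j₂-1, by omega⟩, ⟨t₂, by rw [ej2]; exact ht2⟩⟩ with hy₂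
  have hyne : y₁ ≠ y₂ := by
    intro hcon
    apply hjne
    have := congrArg (fun a => a.1.1) hcon
    rw [hy₁, hy₂] at this
    dsimp only at this
    omega
  have h := hx z
  rw [Fintype.sum_eq_add y₁ y₂ hyne] at h
  · have e1 : pMat K mm nn CC FF P z y₁ = 1 := by
      rw [pMat, if_pos]
      rw [hz, hy₁]
      dsimp only
      rw [ei, ej1]
      exact hent1
    have e2 : pMat K mm nn CC FF P z y₂ = 1 := by
      rw [pMat, if_pos]
      rw [hz, hy₂]
      dsimp only
      rw [ei, ej2]
      exact hent2
    rw [e1, e2, one_mul, one_mul] at h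
    rw [← h, xval, xval, dif_pos ⟨by omega, by rw [ej1]; exact ht1⟩,
      dif_pos ⟨by omega, by rw [ej2]; exact ht2⟩]
  · intro y hy
    by_cases hP : P (z.1.1+1) (y.1.1+1) z.2.1 y.2.1
    · exfalso
      have hb := y.2.2
      rw [hz] at hP
      dsimp only at hP
      rw [ei] at hP
      rcases huniq (y.1.1+1) y.2.1 (by omega) (by have := y.1.2; omega)
        hb hP with
        ⟨e1, e2⟩ | ⟨e1, e2⟩
      · exact hy.1 (sigEq _ _ (by rw [hy₁]; dsimp only; omega) (by rw [hy₁]; dsimp only; omega))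
      · exact hy.2 (sigEq _ _ (by rw [hy₂]; dsimp only; omega) (by rw [hy₂]; dsimp only; omega))
    · rw [pMat, if_neg hP, zero_mul]

end RowMain

end Rows

section Struct

structure Hyps (m n : ℕ) (c f u v : ℕ → ℕ) (w : ℕ) : Prop where
  hc_pos : ∀ j, 1 ≤ j → j ≤ m → 1 ≤ c j
  hc_mono : ∀ i j, 1 ≤ i → i ≤ j → j ≤ m → c j ≤ c i
  hc_zero : ∀ j, m < j → c j = 0
  hf_pos : ∀ j, 1 ≤ j → j ≤ n → 1 ≤ f j
  hf_mono : ∀ i j, 1 ≤ i → i ≤ j → j ≤ n → f j ≤ f i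
  hf_zero : ∀ j, n < j → f j = 0
  hv0 : v 0 = 0
  hu : ∀ l, 1 ≤ l → u l =
    ((Finset.Icc 1 m).filter (fun j => f (v (l - 1) + 1) < c j)).sup id
  hv : ∀ l, 1 ≤ l → v l =
    ((Finset.Icc 1 n).filter (fun i => c (u l + 1) ≤ f i)).sup id
  hw1 : 1 ≤ w
  hwu : u w = m
  hvw1 : v (w - 1) = n
  cut1 : ∀ i, i + 2 ≤ w →
    ∑ j ∈ Finset.Icc (v i + 1) n, f j ≤ ∑ j ∈ Finset.Icc (u (i + 1) + 1) m, c j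
  cut0 : ∀ i, i + 2 ≤ w →
    ∑ j ∈ Finset.Icc (v i + 1) n, (f j - 1) ≤ ∑ j ∈ Finset.Icc (u (i + 1) + 1) m, (c j - 1)

variable {m n : ℕ} {c f u v : ℕ → ℕ} {w : ℕ} (H : Hyps m n c f u v w)

include H

/-- if `w = 1` then `n = 0` -/
lemma wOne (hw : w = 1) : n = 0 := by
  have := H.hvw1
  rw [hw] at this
  simp only [Nat.sub_self] at this
  rw [H.hv0] at this
  omega

lemma uBound (l : ℕ) (hl : 1 ≤ l) : u l ≤ m := by
  rw [H.hu l hl]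
  apply Finset.sup_le
  intro b hb
  exact (Finset.mem_Icc.mp (Finset.mem_filter.mp hb).1).2

lemma vBound (l : ℕ) : v l ≤ n := by
  rcases Nat.eq_zero_or_pos l with h | h
  · subst h; rw [H.hv0]; omega
  · rw [H.hv l h]
    apply Finset.sup_le
    intro b hb
    exact (Finset.mem_Icc.mp (Finset.mem_filter.mp hb).1).2

/-- every `f≥1` index has a layer -/
lemma layerOf (j : ℕ) (hj1 : 1 ≤ j) (hjn : j ≤ n) :
    ∃ l, 1 ≤ l ∧ l ≤ w - 1 ∧ v (l - 1) < j ∧ j ≤ v l := by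
  have hw2 : 2 ≤ w := by
    rcases Nat.lt_or_ge w 2 with h | h
    · have h1 := H.hw1
      have := wOne H (by omega)
      omega
    · exact h
  set S := (Finset.Icc 1 (w-1)).filter (fun l => j ≤ v l) with hS
  have hne : S.Nonempty := by
    refine ⟨w - 1, ?_⟩
    rw [hS]
    simp only [Finset.mem_filter, Finset.mem_Icc]
    exact ⟨⟨by omega, le_rfl⟩, by rw [H.hvw1]; omega⟩
  set l := S.min' hne with hl
  have hmem : l ∈ S := Finset.min'_mem _ _
  rw [hS] at hmem
  simp only [Finset.mem_filter, Finset.mem_Icc] at hmem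
  refine ⟨l, hmem.1.1, hmem.1.2, ?_, hmem.2⟩
  rcases Nat.eq_or_lt_of_le hmem.1.1 with h1 | h1
  · rw [← h1, Nat.sub_self, H.hv0]; omega
  · by_contra hcon
    push_neg at hcon
    have : l - 1 ∈ S := by
      rw [hS]
      simp only [Finset.mem_filter, Finset.mem_Icc]
      exact ⟨⟨by omega, by omega⟩, hcon⟩
    have := Finset.min'_le _ _ this
    omega

lemma f_one_of_gt (j : ℕ) (hj : qF n f < j) (hjn : j ≤ n) : f j = 1 := by
  have h1 : 1 ≤ f j := H.hf_pos j (by omega) hjn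
  by_contra hcon
  have h2 : 2 ≤ f j := by omega
  have := le_sup_of_mem (s := Finset.Icc 1 n) (p := fun j => 2 ≤ f j)
    (Finset.mem_Icc.mpr ⟨by omega, hjn⟩) h2
  rw [← qF] at this
  omega

lemma f_two_of_le (j : ℕ) (hj1 : 1 ≤ j) (hj : j ≤ qF n f) : 2 ≤ f j := by
  have hq1 : 1 ≤ qF n f := by omega
  obtain ⟨hmem, hprop⟩ := sup_attain (s := Finset.Icc 1 n) (p := fun j => 2 ≤ f j) hq1
  calc (2:ℕ) ≤ f (qF n f) := hprop
  _ ≤ f j := H.hf_mono j _ hj1 hj (Finset.mem_Icc.mp hmem).2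

lemma qF_le : qF n f ≤ n := by
  apply Finset.sup_le
  intro b hb
  exact (Finset.mem_Icc.mp (Finset.mem_filter.mp hb).1).2

lemma QC_le : QC m c ≤ m := by
  apply Finset.sup_le
  intro b hb
  exact (Finset.mem_Icc.mp (Finset.mem_filter.mp hb).1).2

lemma c_one_of_gt (i : ℕ) (hi : QC m c < i) (hin : i ≤ m) : c i = 1 := by
  have h1 : 1 ≤ c i := H.hc_pos i (by omega) hin
  by_contra hcon
  have h2 : 2 ≤ c i := by omega
  have := le_sup_of_mem (s := Finset.Icc 1 m) (p := fun i => 2 ≤ c i)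
    (Finset.mem_Icc.mpr ⟨by omega, hin⟩) h2
  rw [← QC] at this
  omega

/-- run end bound: the cells of run `j` sit inside the usable region below `u l` -/
lemma runEnd (j : ℕ) (hj1 : 1 ≤ j) (hjn : j ≤ n) :
    ∃ l, 1 ≤ l ∧ l ≤ w - 1 ∧ v (l-1) < j ∧ j ≤ v l ∧
      psum n f (j-1) ≤ csum m c (u l) := by
  obtain ⟨l, hl1, hlw, hlv, hlv2⟩ := layerOf H j hj1 hjn
  refine ⟨l, hl1, hlw, hlv, hlv2, ?_⟩
  calc psum n f (j-1) ≤ psum n f (v (l-1)) := psum_anti (by omega)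
  _ = ∑ jj ∈ Finset.Icc (v (l-1) + 1) n, (f jj - 1) := rfl
  _ ≤ ∑ ii ∈ Finset.Icc (u (l-1+1) + 1) m, (c ii - 1) := H.cut0 (l-1) (by omega)
  _ = csum m c (u l) := by rw [show l - 1 + 1 = l from by omega]; rfl

/-- usability: any block whose cells begin strictly below the cell-end of run `j`
is small enough for run `j` -/
lemma usable (i j : ℕ) (hi1 : 1 ≤ i) (him : i ≤ m) (hj1 : 1 ≤ j) (hjn : j ≤ n)
    (hf2 : 2 ≤ f j) (hint : csum m c i < psum n f j + (f j - 1)) : c i ≤ f j := by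
  obtain ⟨l, hl1, hlw, hlv, hlv2, hend⟩ := runEnd H j hj1 hjn
  have hps : psum n f (j-1) = psum n f j + (f j - 1) := psum_succ hj1 hjn
  have hiu : u l < i := by
    by_contra hcon
    push_neg at hcon
    have := csum_anti (m := m) (c := c) hcon
    omega
  have h1 : c i ≤ c (u l + 1) := H.hc_mono (u l + 1) i (by omega) (by omega) him
  have h2 : c (u l + 1) ≤ f (v l) := by
    have hvl1 : 1 ≤ v l := by omega
    obtain ⟨hmem, hprop⟩ := sup_attain (s := Finset.Icc 1 n)
      (p := fun i => c (u l + 1) ≤ f i) (by rw [← H.hv l hl1]; omega)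
    rw [← H.hv l hl1] at hmem hprop
    exact hprop
  have h3 : f (v l) ≤ f j := H.hf_mono j (v l) hj1 hlv2 (vBound H l)
  omega

/-- the two blocks share a cell -/
def itsct (m n : ℕ) (c f : ℕ → ℕ) (i j : ℕ) : Prop :=
  csum m c i < psum n f j + (f j - 1) ∧ psum n f j < csum m c i + (c i - 1)

def botB (m n : ℕ) (c f : ℕ → ℕ) (j : ℕ) : ℕ := blkOf m c (psum n f j)

def sstar (m n : ℕ) (c f : ℕ → ℕ) (j : ℕ) : ℕ :=
  if csum m c (botB m n c f j) < psum n f j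
    then csum m c (botB m n c f j - 1) - psum n f j else 0

lemma c2_of_itsct (i j : ℕ) (hi1 : 1 ≤ i) (him : i ≤ m)
    (hit : itsct m n c f i j) : 2 ≤ c i := by
  have hc1 : 1 ≤ c i := H.hc_pos i hi1 him
  by_contra hcon
  have hci : c i = 1 := by omega
  have hz : csum m c i = 0 := by
    apply Finset.sum_eq_zero
    intro ii hii
    simp only [Finset.mem_Icc] at hii
    have := H.hc_mono i ii hi1 (by omega) hii.2
    omega
  obtain ⟨h1, h2⟩ := hit
  omega

lemma no3 (i j j' : ℕ) (hi1 : 1 ≤ i) (him : i ≤ m) (hj1 : 1 ≤ j) (hjj : j + 2 ≤ j')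
    (hj'n : j' ≤ n) (hit : itsct m n c f i j) (hit' : itsct m n c f i j')
    (hus' : c i ≤ f j') : False := by
  have hc2 : 2 ≤ c i := c2_of_itsct H i j hi1 him hit
  have hf2' : 2 ≤ f j' := by omega
  have hf21 : 2 ≤ f (j+1) := by
    calc (2:ℕ) ≤ f j' := hf2'
    _ ≤ f (j+1) := H.hf_mono (j+1) j' (by omega) (by omega) hj'n
  have he1 : psum n f j' + (f j' - 1) = psum n f (j'-1) := (psum_succ (by omega) hj'n).symm
  have he2 : psum n f (j'-1) ≤ psum n f (j+1) := psum_anti (by omega)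
  have he3 : psum n f j = psum n f (j+1) + (f (j+1) - 1) := by
    have := psum_succ (j := j + 1) (n := n) (f := f) (by omega) (by omega)
    simpa using this
  have hcs : csum m c i < psum n f (j+1) := by
    obtain ⟨a, _⟩ := hit'
    omega
  have husm : c i ≤ f (j+1) := by
    apply usable H i (j+1) hi1 him (by omega) (by omega) hf21
    omega
  obtain ⟨a1, a2⟩ := hit
  omega

lemma share (i j : ℕ) (hi1 : 1 ≤ i) (him : i ≤ m) (hj1 : 1 ≤ j) (hj'n : j + 1 ≤ n)
    (hit : itsct m n c f i j) (hit' : itsct m n c f i (j+1)) (hf2' : 2 ≤ f (j+1)) :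
    blkOf m c (psum n f j) = i ∧ csum m c i < psum n f j := by
  have he3 : psum n f j = psum n f (j+1) + (f (j+1) - 1) := by
    have := psum_succ (j := j + 1) (n := n) (f := f) (by omega) (by omega)
    simpa using this
  have h1 : csum m c i < psum n f j := by
    obtain ⟨a, _⟩ := hit'
    omega
  have h2 : psum n f j < csum m c (i-1) := by
    rw [csum_succ hi1 him]
    exact hit.2
  exact ⟨blkOf_uniq hi1 him (by omega) h2, h1⟩

lemma psum_qF : psum n f (qF n f) = 0 := by
  apply Finset.sum_eq_zero
  intro jj hjj
  simp only [Finset.mem_Icc] at hjj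
  have := f_one_of_gt H jj (by omega) (by omega)
  omega

lemma lt_qF_of_psum_pos (j : ℕ) (hp : 0 < psum n f j) : j < qF n f := by
  have : ∃ jj ∈ Finset.Icc (j+1) n, 0 < f jj - 1 := by
    by_contra hcon
    push_neg at hcon
    have : psum n f j = 0 := Finset.sum_eq_zero (fun a ha => by have := hcon a ha; omega)
    omega
  obtain ⟨jj, hjj, hfjj⟩ := this
  simp only [Finset.mem_Icc] at hjj
  have : jj ≤ qF n f := le_sup_of_mem (Finset.mem_Icc.mpr ⟨by omega, hjj.2⟩) (by omega)
  omega

/-- count matching for the size-one part -/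
lemma matchCount : n - qF n f ≤ m - QC m c := by
  rcases le_or_gt n (qF n f) with h | h
  · omega
  -- some f = 1 exists
  have hn1 : 1 ≤ n := by omega
  have hw2 : 2 ≤ w := by
    rcases Nat.lt_or_ge w 2 with hh | hh
    · have h1 := H.hw1
      have := wOne H (by omega)
      omega
    · exact hh
  have hfn1 : f n = 1 := f_one_of_gt H n h le_rfl
  set S := (Finset.Icc 1 (w-1)).filter (fun l => c (u l + 1) ≤ 1) with hS
  have hne : S.Nonempty := by
    refine ⟨w - 1, ?_⟩
    rw [hS]
    simp only [Finset.mem_filter, Finset.mem_Icc]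
    refine ⟨⟨by omega, le_rfl⟩, ?_⟩
    -- c (u (w-1) + 1) ≤ f n = 1
    obtain ⟨hmem, hprop⟩ := sup_attain (s := Finset.Icc 1 n)
      (p := fun i => c (u (w-1) + 1) ≤ f i) (by rw [← H.hv (w-1) (by omega), H.hvw1]; omega)
    rw [← H.hv (w-1) (by omega), H.hvw1] at hprop
    omega
  set l₁ := S.min' hne with hl₁
  have hmem : l₁ ∈ S := Finset.min'_mem _ _
  rw [hS] at hmem
  simp only [Finset.mem_filter, Finset.mem_Icc] at hmem
  obtain ⟨⟨hl1, hlw⟩, hcu⟩ := hmem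
  -- v (l₁ - 1) = qF
  have hvle : v (l₁ - 1) ≤ qF n f := by
    rcases Nat.eq_or_lt_of_le hl1 with h1 | h1
    · rw [← h1, Nat.sub_self, H.hv0]; omega
    · have hnotS : ¬ (c (u (l₁ - 1) + 1) ≤ 1) := by
        intro hcon
        have : l₁ - 1 ∈ S := by
          rw [hS]
          simp only [Finset.mem_filter, Finset.mem_Icc]
          exact ⟨⟨by omega, by omega⟩, hcon⟩
        have := Finset.min'_le _ _ this
        omega
      rcases Nat.eq_zero_or_pos (v (l₁ - 1)) with h0 | h0
      · omega
      · obtain ⟨hmem2, hprop2⟩ := sup_attain (s := Finset.Icc 1 n)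
          (p := fun i => c (u (l₁-1) + 1) ≤ f i) (by rw [← H.hv (l₁-1) (by omega)]; omega)
        rw [← H.hv (l₁-1) (by omega)] at hmem2 hprop2
        apply le_sup_of_mem hmem2
        omega
  have hvge : qF n f ≤ v (l₁ - 1) := by
    by_contra hcon
    push_neg at hcon
    have hjstar : v (l₁ - 1) + 1 ≤ qF n f := by omega
    have hf2 : 2 ≤ f (v (l₁ - 1) + 1) := f_two_of_le H _ (by omega) hjstar
    have hcut := H.cut0 (l₁ - 1) (by omega)
    rw [show l₁ - 1 + 1 = l₁ from by omega] at hcut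
    have hrhs : ∑ ii ∈ Finset.Icc (u l₁ + 1) m, (c ii - 1) = 0 := by
      apply Finset.sum_eq_zero
      intro ii hii
      simp only [Finset.mem_Icc] at hii
      have := H.hc_mono (u l₁ + 1) ii (by omega) hii.1 hii.2
      omega
    have hlhs : 1 ≤ ∑ jj ∈ Finset.Icc (v (l₁ - 1) + 1) n, (f jj - 1) := by
      calc (1:ℕ) ≤ f (v (l₁ - 1) + 1) - 1 := by omega
      _ ≤ ∑ jj ∈ Finset.Icc (v (l₁ - 1) + 1) n, (f jj - 1) := by
          apply Finset.single_le_sum (f := fun jj => f jj - 1)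
          · intro a _; omega
          · simp only [Finset.mem_Icc]
            constructor
            · omega
            · have := qF_le H
              omega
    omega
  have hcut1 := H.cut1 (l₁ - 1) (by omega)
  rw [show l₁ - 1 + 1 = l₁ from by omega, hvle.antisymm hvge] at hcut1
  have hulm : u l₁ ≤ m := uBound H l₁ hl1
  have hlhs : ∑ jj ∈ Finset.Icc (qF n f + 1) n, f jj = n - qF n f := by
    rw [Finset.sum_congr rfl (fun a ha => by
      simp only [Finset.mem_Icc] at ha
      exact f_one_of_gt H a (by omega) ha.2)]
    simp [Nat.card_Icc]
  have hrhs : ∑ ii ∈ Finset.Icc (u l₁ + 1) m, c ii = m - u l₁ := by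
    rw [Finset.sum_congr rfl (fun a ha => by
      simp only [Finset.mem_Icc] at ha
      have h1 := H.hc_mono (u l₁ + 1) a (by omega) ha.1 ha.2
      have h2 := H.hc_pos a (by omega) ha.2
      omega : ∀ a ∈ Finset.Icc (u l₁ + 1) m, c a = 1)]
    simp [Nat.card_Icc]
  rw [hlhs, hrhs] at hcut1
  have hQu : QC m c ≤ u l₁ := by
    rcases Nat.eq_zero_or_pos (QC m c) with h0 | h0
    · omega
    · obtain ⟨hmem3, hprop3⟩ := sup_attain (s := Finset.Icc 1 m)
        (p := fun i => 2 ≤ c i) h0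
      have hprop3' : 2 ≤ c (QC m c) := hprop3
      have hmem3' : QC m c ∈ Finset.Icc 1 m := hmem3
      by_contra hcon
      push_neg at hcon
      have := H.hc_mono (u l₁ + 1) (QC m c) (by omega) (by omega)
        (Finset.mem_Icc.mp hmem3').2
      omega
  omega

lemma matchC1 (j : ℕ) (hj : qF n f < j) (hjn : j ≤ n) :
    c (m - (n - j)) = 1 ∧ 1 ≤ m - (n - j) ∧ m - (n - j) ≤ m ∧ QC m c < m - (n - j) := by
  have hmc := matchCount H
  have hQ := QC_le H
  have hq := qF_le H
  have h1 : QC m c < m - (n - j) := by omega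
  have h2 : m - (n - j) ≤ m := by omega
  have h3 : 1 ≤ m - (n - j) := by omega
  exact ⟨c_one_of_gt H _ h1 h2, h3, h2, h1⟩

section Zip

variable {K : Type*} [Field K]

/-- package of facts about the block carrying the entry of column `(j,t)` -/
lemma entryPack (j t : ℕ) (hj1 : 1 ≤ j) (hjq : j ≤ qF n f) (ht : t < f j)
    (hst : sstar m n c f j ≤ t) :
    ∃ i A r, 1 ≤ i ∧ i ≤ m ∧ csum m c i ≤ psum n f j + t ∧
      itsct m n c f i j ∧ c i ≤ f j ∧ 2 ≤ c i ∧ r < c i ∧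
      isE m n c f i j r t ∧ A = shiftA m n c f i j ∧
      (A = csum m c i - psum n f j ∨ A = f j - c i) ∧ A ≤ f j - c i ∧ t = r + A ∧
      (csum m c i < psum n f j → False) := by
  have hf2 : 2 ≤ f j := f_two_of_le H j hj1 hjq
  have hjn : j ≤ n := le_trans hjq (qF_le H)
  have hps : psum n f (j-1) = psum n f j + (f j - 1) := psum_succ hj1 hjn
  have hcs0 : psum n f (j-1) ≤ csum m c 0 := by
    obtain ⟨l, _, _, _, _, hend⟩ := runEnd H j hj1 hjn
    exact le_trans hend (csum_anti (Nat.zero_le _))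
  rcases le_or_gt t (f j - 2) with hmid | htop
  · -- middle branch
    set p' := psum n f j + t with hp'
    have hp0 : p' < csum m c 0 := by omega
    obtain ⟨hi1, him, hcle, hclt⟩ := blkOf_spec hp0
    set i := blkOf m c p' with hi
    have hcsucc : csum m c (i-1) = csum m c i + (c i - 1) := csum_succ hi1 him
    have hitj : itsct m n c f i j := by
      constructor
      · omega
      · omega
    have husj : c i ≤ f j := usable H i j hi1 him hj1 hjn hf2 (by omega)
    have hc2 : 2 ≤ c i := c2_of_itsct H i j hi1 him hitj
    set A := shiftA m n c f i j with hA
    have hA1 : A ≤ csum m c i - psum n f j := min_le_left _ _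
    have hA2 : A ≤ f j - c i := min_le_right _ _
    have hAor : A = csum m c i - psum n f j ∨ A = f j - c i := min_choice _ _
    have hAt : A ≤ t := by omega
    refine ⟨i, A, t - A, hi1, him, by omega, hitj, husj, hc2, ?_, ?_, rfl, hAor, hA2, by omega, ?_⟩
    · rcases hAor with h | h <;> omega
    · exact ⟨husj, hitj.1, hitj.2, by omega⟩
    · -- csum i < psum j impossible given t ≥ sstar
      intro hlt
      have hbot : blkOf m c (psum n f j) = i :=
        blkOf_uniq hi1 him (by omega) (by omega)
      have hss : sstar m n c f j = csum m c (i-1) - psum n f j := by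
        rw [sstar, botB, hbot, if_pos hlt]
      omega
  · -- top branch
    have htt : t = f j - 1 := by omega
    set p' := psum n f j + (f j - 2) with hp'
    have hp0 : p' < csum m c 0 := by omega
    obtain ⟨hi1, him, hcle, hclt⟩ := blkOf_spec hp0
    set i := blkOf m c p' with hi
    have hcsucc : csum m c (i-1) = csum m c i + (c i - 1) := csum_succ hi1 him
    have hitj : itsct m n c f i j := by
      constructor
      · omega
      · omega
    have husj : c i ≤ f j := usable H i j hi1 him hj1 hjn hf2 (by omega)
    have hc2 : 2 ≤ c i := c2_of_itsct H i j hi1 him hitj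
    have hcpf : psum n f j + f j ≤ csum m c i + c i := by omega
    have hcge : psum n f j ≤ csum m c i := by omega
    have hAeq : shiftA m n c f i j = f j - c i := by
      rw [shiftA]
      apply min_eq_right
      omega
    refine ⟨i, f j - c i, c i - 1, hi1, him, by omega, hitj, husj, hc2, by omega,
      ⟨husj, hitj.1, hitj.2, by omega⟩, hAeq.symm, Or.inr rfl, le_rfl, by omega, by omega⟩

/-- uniqueness of entries in a row, given the central run `j` -/
lemma rowCases (i r j : ℕ) (hi1 : 1 ≤ i) (him : i ≤ m) (hj1 : 1 ≤ j) (hjn : j ≤ n)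
    (hitj : itsct m n c f i j) (husj : c i ≤ f j)
    (hnoshare : csum m c i < psum n f j → False)
    (j' t' : ℕ) (hj'1 : 1 ≤ j') (hj'n : j' ≤ n)
    (hE : isE m n c f i j' r t') :
    (j' = j ∧ t' = r + shiftA m n c f i j) ∨
      (j' = j - 1 ∧ 2 ≤ j ∧ t' = r + shiftA m n c f i (j-1) ∧ itsct m n c f i (j-1)) := by
  obtain ⟨hus', hit1', hit2', hteq'⟩ := hE
  have hit' : itsct m n c f i j' := ⟨hit1', hit2'⟩
  have hc2 : 2 ≤ c i := c2_of_itsct H i j hi1 him hitj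
  rcases lt_trichotomy j' j with hlt | heq | hgt
  · -- j' < j
    rcases le_or_gt j (j' + 1) with h1 | h1
    · -- j' = j - 1
      right
      have hjj : j - 1 = j' := by omega
      exact ⟨by omega, by omega, by rw [hjj]; exact hteq', by rw [hjj]; exact hit'⟩
    · exact absurd (no3 H i j' j hi1 him hj'1 (by omega) hjn hit' hitj husj) (fun a => a)
  · left; exact ⟨heq, by rw [← heq]; omega⟩
  · -- j' > j
    rcases le_or_gt j' (j + 1) with h1 | h1
    · -- j' = j + 1
      exfalso
      have hj'j : j' = j + 1 := by omega
      rw [hj'j] at hit' hus'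
      have hf2' : 2 ≤ f (j+1) := by omega
      obtain ⟨_, hcc⟩ := share H i j hi1 him hj1 (by omega) hitj hit' hf2'
      exact hnoshare hcc
    · exact absurd (no3 H i j j' hi1 him hj1 (by omega) hj'n hitj hit' hus') (fun a => a)

/-- the downward zipper for `Φ` -/
lemma zipC (x : (Σ j : Fin n, Fin (f (j.1+1))) → K)
    (hx : ∀ z, ∑ y, pMat K m n c f (Ent m n c f) z y * x y = 0) :
    ∀ j, 1 ≤ j → j ≤ qF n f → ∀ t, sstar m n c f j ≤ t → xval n f x j t = 0 := by
  intro j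
  induction j using Nat.strong_induction_on with
  | _ j IH =>
    intro hj1 hjq t hst
    rcases le_or_gt (f j) t with hbig | ht
    · apply xval_zero
      rintro ⟨h1, h2⟩
      rw [show j - 1 + 1 = j from by omega] at h2
      omega
    have hjn : j ≤ n := le_trans hjq (qF_le H)
    have hf2 : 2 ≤ f j := f_two_of_le H j hj1 hjq
    obtain ⟨i, A, r, hi1, him, hF2, hitj, husj, hc2, hrc, hE, hAs, hAor, hA2, htr, hnos⟩ :=
      entryPack H j t hj1 hjq ht hst
    have hps : psum n f (j-1) = psum n f j + (f j - 1) := psum_succ hj1 hjn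
    have hcsucc : csum m c (i-1) = csum m c i + (c i - 1) := csum_succ hi1 him
    by_cases hsh : 2 ≤ j ∧ itsct m n c f i (j-1)
    · -- shared with the run above : two entries
      obtain ⟨hj2, hit'⟩ := hsh
      have hf2' : 2 ≤ f (j-1) := by
        calc (2:ℕ) ≤ f j := hf2
        _ ≤ f (j-1) := H.hf_mono (j-1) j (by omega) (by omega) hjn
      obtain ⟨hbot', hlt'⟩ := share H i (j-1) hi1 him (by omega) (by omega)
        hit' (by rw [show j - 1 + 1 = j from by omega]; exact hitj) (by
          rw [show j - 1 + 1 = j from by omega]; exact hf2)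
      have hA0 : shiftA m n c f i (j-1) = 0 := by
        rw [shiftA]
        have : csum m c i - psum n f (j-1) = 0 := by omega
        rw [this]
        exact Nat.zero_min _
      have hus' : c i ≤ f (j-1) := by
        apply usable H i (j-1) hi1 him (by omega) (by omega) hf2'
        exact hit'.1
      have hE' : isE m n c f i (j-1) r r := ⟨hus', hit'.1, hit'.2, by omega⟩
      have h2 := row2 m n c f (Ent m n c f) x hx i r j t (j-1) r hi1 him hrc
        hj1 hjn ht (by omega) (by omega) (by omega) (by omega)
        (Or.inl hE) (Or.inl hE') ?_
      · have h3 : xval n f x (j-1) r = 0 := by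
          apply IH (j-1) (by omega) (by omega) (by omega)
          -- sstar (j-1) ≤ r
          have hss : sstar m n c f (j-1) = csum m c (i-1) - psum n f (j-1) := by
            rw [sstar, botB, hbot', if_pos hlt']
          rw [hss]
          rcases hAor with h | h <;> omega
        rw [h3, add_zero] at h2
        exact h2
      · -- uniqueness
        intro j' t' hj'1 hj'n ht' hent
        have hEE : isE m n c f i j' r t' := by
          rcases hent with he | hm
          · exact he
          · exfalso
            obtain ⟨_, hci, _, _, _, _⟩ := hm
            omega
        rcases rowCases H i r j hi1 him hj1 hjn hitj husj hnos j' t' hj'1 hj'n hEE with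
          ⟨e1, e2⟩ | ⟨e1, e2, e3, e4⟩
        · left; exact ⟨e1, by omega⟩
        · right; rw [hA0] at e3; exact ⟨e1, by omega⟩
    · -- single entry
      apply rowU m n c f (Ent m n c f) x hx i r j t hi1 him hrc hj1 hjn ht (Or.inl hE)
      intro j' t' hj'1 hj'n ht' hent
      have hEE : isE m n c f i j' r t' := by
        rcases hent with he | hm
        · exact he
        · exfalso
          obtain ⟨_, hci, _, _, _, _⟩ := hm
          omega
      rcases rowCases H i r j hi1 him hj1 hjn hitj husj hnos j' t' hj'1 hj'n hEE with
        ⟨e1, e2⟩ | ⟨e1, e2, e3, e4⟩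
      · exact ⟨e1, by omega⟩
      · exact absurd ⟨e2, by rw [show j - 1 = j' from by omega] at e4 ⊢; exact e4⟩ hsh

/-- the upward zipper for `Φ` : all entries of `f ≥ 2` columns vanish -/
lemma zipD (x : (Σ j : Fin n, Fin (f (j.1+1))) → K)
    (hx : ∀ z, ∑ y, pMat K m n c f (Ent m n c f) z y * x y = 0) :
    ∀ d j, 1 ≤ j → j ≤ qF n f → qF n f - j ≤ d → ∀ t, xval n f x j t = 0 := by
  intro d
  induction d with
  | zero =>
    intro j hj1 hjq hd t
    have hjq' : j = qF n f := by omega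
    have hss : sstar m n c f j = 0 := by
      rw [sstar, if_neg]
      rw [hjq', psum_qF H]
      omega
    exact zipC H x hx j hj1 hjq t (by omega)
  | succ d IHd =>
    intro j hj1 hjq hd t
    rcases le_or_gt (sstar m n c f j) t with hst | hst
    · exact zipC H x hx j hj1 hjq t hst
    -- t < sstar j : bottom-shared row
    have hjn : j ≤ n := le_trans hjq (qF_le H)
    have hf2 : 2 ≤ f j := f_two_of_le H j hj1 hjq
    have hps : psum n f (j-1) = psum n f j + (f j - 1) := psum_succ hj1 hjn
    -- sstar j > 0 forces the if-branch
    have hcond : csum m c (botB m n c f j) < psum n f j := by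
      by_contra hcon
      rw [sstar, if_neg hcon] at hst
      omega
    have hp0 : psum n f j < csum m c 0 := by
      obtain ⟨l, _, _, _, _, hend⟩ := runEnd H j hj1 hjn
      have := csum_anti (m := m) (c := c) (Nat.zero_le (u l))
      omega
    obtain ⟨hi1, him, hcle, hclt⟩ := blkOf_spec hp0
    set i := blkOf m c (psum n f j) with hi
    have hib : botB m n c f j = i := rfl
    rw [hib] at hcond
    have hss : sstar m n c f j = csum m c (i-1) - psum n f j := by
      rw [sstar, hib, if_pos hcond]
    have hcsucc : csum m c (i-1) = csum m c i + (c i - 1) := csum_succ hi1 him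
    -- j < qF
    have hjlt : j < qF n f := lt_qF_of_psum_pos H j (by omega)
    have hf2' : 2 ≤ f (j+1) := f_two_of_le H (j+1) (by omega) (by omega)
    have hj1n : j + 1 ≤ n := by
      have := qF_le H
      omega
    have hps' : psum n f j = psum n f (j+1) + (f (j+1) - 1) := by
      have := psum_succ (j := j+1) (n := n) (f := f) (by omega) hj1n
      simpa using this
    have hitj : itsct m n c f i j := ⟨by omega, by omega⟩
    have hitj' : itsct m n c f i (j+1) := ⟨by omega, by omega⟩
    have husj : c i ≤ f j := usable H i j hi1 him hj1 hjn hf2 (by omega)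
    have husj' : c i ≤ f (j+1) := usable H i (j+1) hi1 him (by omega) hj1n hf2' (by omega)
    have hc2 : 2 ≤ c i := c2_of_itsct H i j hi1 him hitj
    have hA0 : shiftA m n c f i j = 0 := by
      rw [shiftA]
      have : csum m c i - psum n f j = 0 := by omega
      rw [this]
      exact Nat.zero_min _
    set A' := shiftA m n c f i (j+1) with hA'
    have hA'2 : A' ≤ f (j+1) - c i := min_le_right _ _
    have hE1 : isE m n c f i j t t := ⟨husj, hitj.1, hitj.2, by omega⟩
    have hE2 : isE m n c f i (j+1) t (t + A') := ⟨husj', hitj'.1, hitj'.2, rfl⟩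
    have h2 := row2 m n c f (Ent m n c f) x hx i t j t (j+1) (t + A') hi1 him
      (by omega) hj1 hjn (by omega) (by omega) hj1n (by omega) (by omega)
      (Or.inl hE1) (Or.inl hE2) ?_
    · have h3 : xval n f x (j+1) (t + A') = 0 := IHd (j+1) (by omega) (by omega) (by omega) _
      rw [h3, add_zero] at h2
      exact h2
    · intro j' t' hj'1 hj'n ht' hent
      have hEE : isE m n c f i j' t t' := by
        rcases hent with he | hm
        · exact he
        · exfalso
          obtain ⟨_, hci, _, _, _, _⟩ := hm
          omega
      obtain ⟨hus'', hit1'', hit2'', hteq''⟩ := hEE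
      have hit'' : itsct m n c f i j' := ⟨hit1'', hit2''⟩
      rcases lt_trichotomy j' j with hlt | heq | hgt
      · -- j' ≤ j - 1 : impossible, three runs
        exfalso
        exact no3 H i j' (j+1) hi1 him hj'1 (by omega) hj1n hit'' hitj' husj'
      · left
        refine ⟨heq, ?_⟩
        rw [heq] at hteq''
        omega
      · rcases le_or_gt j' (j + 1) with h1 | h1
        · right
          have hjj : j' = j + 1 := by omega
          rw [hjj] at hteq''
          exact ⟨by omega, by rw [hA']; exact hteq''⟩
        · exfalso
          exact no3 H i j j' hi1 him hj1 (by omega) hj'n hitj hit'' hus''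

/-- entry package for `Ψ` (level 0) -/
lemma entryPack0 (j t : ℕ) (hj1 : 1 ≤ j) (hjq : j ≤ qF n f) (ht : t < f j - 1)
    (hst : sstar m n c f j ≤ t) :
    ∃ i A r, 1 ≤ i ∧ i ≤ m ∧ csum m c i ≤ psum n f j + t ∧
      itsct m n c f i j ∧ c i ≤ f j ∧ 2 ≤ c i ∧ r < c i - 1 ∧
      isE m n c f i j r t ∧ A = shiftA m n c f i j ∧
      (A = csum m c i - psum n f j ∨ A = f j - c i) ∧ A ≤ f j - c i ∧ t = r + A ∧
      (csum m c i < psum n f j → False) := by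
  have hf2 : 2 ≤ f j := f_two_of_le H j hj1 hjq
  have hjn : j ≤ n := le_trans hjq (qF_le H)
  have hps : psum n f (j-1) = psum n f j + (f j - 1) := psum_succ hj1 hjn
  have hcs0 : psum n f (j-1) ≤ csum m c 0 := by
    obtain ⟨l, _, _, _, _, hend⟩ := runEnd H j hj1 hjn
    exact le_trans hend (csum_anti (Nat.zero_le _))
  set p' := psum n f j + t with hp'
  have hp0 : p' < csum m c 0 := by omega
  obtain ⟨hi1, him, hcle, hclt⟩ := blkOf_spec hp0
  set i := blkOf m c p' with hi
  have hcsucc : csum m c (i-1) = csum m c i + (c i - 1) := csum_succ hi1 him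
  have hitj : itsct m n c f i j := by
    constructor
    · omega
    · omega
  have husj : c i ≤ f j := usable H i j hi1 him hj1 hjn hf2 (by omega)
  have hc2 : 2 ≤ c i := c2_of_itsct H i j hi1 him hitj
  set A := shiftA m n c f i j with hA
  have hA1 : A ≤ csum m c i - psum n f j := min_le_left _ _
  have hA2 : A ≤ f j - c i := min_le_right _ _
  have hAor : A = csum m c i - psum n f j ∨ A = f j - c i := min_choice _ _
  have hAt : A ≤ t := by omega
  refine ⟨i, A, t - A, hi1, him, by omega, hitj, husj, hc2, ?_, ?_, rfl, hAor, hA2,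
    by omega, ?_⟩
  · rcases hAor with h | h <;> omega
  · exact ⟨husj, hitj.1, hitj.2, by omega⟩
  · intro hlt
    have hbot : blkOf m c (psum n f j) = i :=
      blkOf_uniq hi1 him (by omega) (by omega)
    have hss : sstar m n c f j = csum m c (i-1) - psum n f j := by
      rw [sstar, botB, hbot, if_pos hlt]
    omega

/-- the downward zipper for `Ψ` -/
lemma zipC0 (x : (Σ j : Fin n, Fin (f (j.1+1) - 1)) → K)
    (hx : ∀ z, ∑ y, pMat K m n (fun k => c k - 1) (fun k => f k - 1)
      (isE m n c f) z y * x y = 0) :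
    ∀ j, 1 ≤ j → j ≤ qF n f → ∀ t, sstar m n c f j ≤ t →
      xval n (fun k => f k - 1) x j t = 0 := by
  intro j
  induction j using Nat.strong_induction_on with
  | _ j IH =>
    intro hj1 hjq t hst
    rcases le_or_gt (f j - 1) t with hbig | ht
    · apply xval_zero
      rintro ⟨h1, h2⟩
      rw [show j - 1 + 1 = j from by omega] at h2
      have h2' : t < f j - 1 := h2
      omega
    have hjn : j ≤ n := le_trans hjq (qF_le H)
    have hf2 : 2 ≤ f j := f_two_of_le H j hj1 hjq
    obtain ⟨i, A, r, hi1, him, hF2, hitj, husj, hc2, hrc, hE, hAs, hAor, hA2, htr, hnos⟩ :=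
      entryPack0 H j t hj1 hjq ht hst
    have hps : psum n f (j-1) = psum n f j + (f j - 1) := psum_succ hj1 hjn
    have hcsucc : csum m c (i-1) = csum m c i + (c i - 1) := csum_succ hi1 him
    by_cases hsh : 2 ≤ j ∧ itsct m n c f i (j-1)
    · obtain ⟨hj2, hit'⟩ := hsh
      have hf2' : 2 ≤ f (j-1) := by
        calc (2:ℕ) ≤ f j := hf2
        _ ≤ f (j-1) := H.hf_mono (j-1) j (by omega) (by omega) hjn
      obtain ⟨hbot', hlt'⟩ := share H i (j-1) hi1 him (by omega) (by omega)
        hit' (by rw [show j - 1 + 1 = j from by omega]; exact hitj) (by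
          rw [show j - 1 + 1 = j from by omega]; exact hf2)
      have hA0 : shiftA m n c f i (j-1) = 0 := by
        rw [shiftA]
        have : csum m c i - psum n f (j-1) = 0 := by omega
        rw [this]
        exact Nat.zero_min _
      have hus' : c i ≤ f (j-1) := by
        apply usable H i (j-1) hi1 him (by omega) (by omega) hf2'
        exact hit'.1
      have hE' : isE m n c f i (j-1) r r := ⟨hus', hit'.1, hit'.2, by omega⟩
      have h2 := row2 m n (fun k => c k - 1) (fun k => f k - 1) (isE m n c f) x hx
        i r j t (j-1) r hi1 him hrc
        hj1 hjn ht (by omega) (by omega) (show r < f (j-1) - 1 from by omega) (by omega)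
        hE hE' ?_
      · have h3 : xval n (fun k => f k - 1) x (j-1) r = 0 := by
          apply IH (j-1) (by omega) (by omega) (by omega)
          have hss : sstar m n c f (j-1) = csum m c (i-1) - psum n f (j-1) := by
            rw [sstar, botB, hbot', if_pos hlt']
          rw [hss]
          rcases hAor with h | h <;> omega
        rw [h3, add_zero] at h2
        exact h2
      · intro j' t' hj'1 hj'n ht' hEE
        rcases rowCases H i r j hi1 him hj1 hjn hitj husj hnos j' t' hj'1 hj'n hEE with
          ⟨e1, e2⟩ | ⟨e1, e2, e3, e4⟩
        · left; exact ⟨e1, by omega⟩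
        · right; rw [hA0] at e3; exact ⟨e1, by omega⟩
    · apply rowU m n (fun k => c k - 1) (fun k => f k - 1) (isE m n c f) x hx
        i r j t hi1 him hrc hj1 hjn ht hE
      intro j' t' hj'1 hj'n ht' hEE
      rcases rowCases H i r j hi1 him hj1 hjn hitj husj hnos j' t' hj'1 hj'n hEE with
        ⟨e1, e2⟩ | ⟨e1, e2, e3, e4⟩
      · exact ⟨e1, by omega⟩
      · exact absurd ⟨e2, by rw [show j - 1 = j' from by omega] at e4 ⊢; exact e4⟩ hsh

/-- the upward zipper for `Ψ` -/
lemma zipD0 (x : (Σ j : Fin n, Fin (f (j.1+1) - 1)) → K)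
    (hx : ∀ z, ∑ y, pMat K m n (fun k => c k - 1) (fun k => f k - 1)
      (isE m n c f) z y * x y = 0) :
    ∀ d j, 1 ≤ j → j ≤ qF n f → qF n f - j ≤ d → ∀ t,
      xval n (fun k => f k - 1) x j t = 0 := by
  intro d
  induction d with
  | zero =>
    intro j hj1 hjq hd t
    have hjq' : j = qF n f := by omega
    have hss : sstar m n c f j = 0 := by
      rw [sstar, if_neg]
      rw [hjq', psum_qF H]
      omega
    exact zipC0 H x hx j hj1 hjq t (by omega)
  | succ d IHd =>
    intro j hj1 hjq hd t
    rcases le_or_gt (sstar m n c f j) t with hst | hst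
    · exact zipC0 H x hx j hj1 hjq t hst
    have hjn : j ≤ n := le_trans hjq (qF_le H)
    have hf2 : 2 ≤ f j := f_two_of_le H j hj1 hjq
    have hps : psum n f (j-1) = psum n f j + (f j - 1) := psum_succ hj1 hjn
    have hcond : csum m c (botB m n c f j) < psum n f j := by
      by_contra hcon
      rw [sstar, if_neg hcon] at hst
      omega
    have hp0 : psum n f j < csum m c 0 := by
      obtain ⟨l, _, _, _, _, hend⟩ := runEnd H j hj1 hjn
      have := csum_anti (m := m) (c := c) (Nat.zero_le (u l))
      omega
    obtain ⟨hi1, him, hcle, hclt⟩ := blkOf_spec hp0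
    set i := blkOf m c (psum n f j) with hi
    have hib : botB m n c f j = i := rfl
    rw [hib] at hcond
    have hss : sstar m n c f j = csum m c (i-1) - psum n f j := by
      rw [sstar, hib, if_pos hcond]
    have hcsucc : csum m c (i-1) = csum m c i + (c i - 1) := csum_succ hi1 him
    have hjlt : j < qF n f := lt_qF_of_psum_pos H j (by omega)
    have hf2' : 2 ≤ f (j+1) := f_two_of_le H (j+1) (by omega) (by omega)
    have hj1n : j + 1 ≤ n := by
      have := qF_le H
      omega
    have hps' : psum n f j = psum n f (j+1) + (f (j+1) - 1) := by
      have := psum_succ (j := j+1) (n := n) (f := f) (by omega) hj1n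
      simpa using this
    have hitj : itsct m n c f i j := ⟨by omega, by omega⟩
    have hitj' : itsct m n c f i (j+1) := ⟨by omega, by omega⟩
    have husj : c i ≤ f j := usable H i j hi1 him hj1 hjn hf2 (by omega)
    have husj' : c i ≤ f (j+1) := usable H i (j+1) hi1 him (by omega) hj1n hf2' (by omega)
    have hc2 : 2 ≤ c i := c2_of_itsct H i j hi1 him hitj
    have hA0 : shiftA m n c f i j = 0 := by
      rw [shiftA]
      have : csum m c i - psum n f j = 0 := by omega
      rw [this]
      exact Nat.zero_min _
    set A' := shiftA m n c f i (j+1) with hA'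
    have hA'2 : A' ≤ f (j+1) - c i := min_le_right _ _
    have hE1 : isE m n c f i j t t := ⟨husj, hitj.1, hitj.2, by omega⟩
    have hE2 : isE m n c f i (j+1) t (t + A') := ⟨husj', hitj'.1, hitj'.2, rfl⟩
    have h2 := row2 m n (fun k => c k - 1) (fun k => f k - 1) (isE m n c f) x hx
      i t j t (j+1) (t + A') hi1 him
      (show t < c i - 1 from by omega) hj1 hjn (show t < f j - 1 from by omega)
      (by omega) hj1n (show t + A' < f (j+1) - 1 from by omega) (by omega)
      hE1 hE2 ?_
    · have h3 : xval n (fun k => f k - 1) x (j+1) (t + A') = 0 :=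
        IHd (j+1) (by omega) (by omega) (by omega) _
      rw [h3, add_zero] at h2
      exact h2
    · intro j' t' hj'1 hj'n ht' hEE
      obtain ⟨hus'', hit1'', hit2'', hteq''⟩ := hEE
      have hit'' : itsct m n c f i j' := ⟨hit1'', hit2''⟩
      rcases lt_trichotomy j' j with hlt | heq | hgt
      · exfalso
        exact no3 H i j' (j+1) hi1 him hj'1 (by omega) hj1n hit'' hitj' husj'
      · left
        refine ⟨heq, ?_⟩
        rw [heq] at hteq''
        omega
      · rcases le_or_gt j' (j + 1) with h1 | h1
        · right
          have hjj : j' = j + 1 := by omega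
          rw [hjj] at hteq''
          exact ⟨by omega, by rw [hA']; exact hteq''⟩
        · exfalso
          exact no3 H i j j' hi1 him hj1 (by omega) hj'n hitj hit'' hus''

lemma phiInj (x : (Σ j : Fin n, Fin (f (j.1+1))) → K)
    (hx : ∀ z, ∑ y, pMat K m n c f (Ent m n c f) z y * x y = 0) :
    x = 0 := by
  funext y
  show x y = 0
  rw [xval_eq x y]
  have hjn : y.1.1 + 1 ≤ n := by have := y.1.2; omega
  have ht := y.2.2
  rcases le_or_gt (y.1.1 + 1) (qF n f) with hle | hgt
  · exact zipD H x hx (qF n f) (y.1.1+1) (by omega) hle (by omega) y.2.1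
  · -- matched column
    have hf1 : f (y.1.1+1) = 1 := f_one_of_gt H _ hgt hjn
    obtain ⟨hc1, hi1, him, hQ⟩ := matchC1 H (y.1.1+1) hgt hjn
    have hmc := matchCount H
    have hqle := qF_le H
    have ht0 : y.2.1 = 0 := by omega
    rw [ht0]
    apply rowU m n c f (Ent m n c f) x hx (m - (n - (y.1.1+1))) 0 (y.1.1+1) 0
      hi1 him (by omega) (by omega) hjn (by omega)
      (Or.inr ⟨hf1, hc1, rfl, hgt, rfl, rfl⟩)
    intro j' t' hj'1 hj'n ht' hent
    rcases hent with he | hm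
    · exfalso
      have hit : itsct m n c f (m - (n - (y.1.1+1))) j' := ⟨he.2.1, he.2.2.1⟩
      have := c2_of_itsct H _ j' hi1 him hit
      omega
    · obtain ⟨hf1', hc1', heqi, hq', hr', ht''⟩ := hm
      constructor
      · omega
      · exact ht''

lemma psiInj (x : (Σ j : Fin n, Fin (f (j.1+1) - 1)) → K)
    (hx : ∀ z, ∑ y, pMat K m n (fun k => c k - 1) (fun k => f k - 1)
      (isE m n c f) z y * x y = 0) :
    x = 0 := by
  funext y
  show x y = 0
  rw [xval_eq (FF := fun k => f k - 1) x y]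
  have hjn : y.1.1 + 1 ≤ n := by have := y.1.2; omega
  have ht : y.2.1 < f (y.1.1+1) - 1 := y.2.2
  rcases le_or_gt (y.1.1 + 1) (qF n f) with hle | hgt
  · exact zipD0 H x hx (qF n f) (y.1.1+1) (by omega) hle (by omega) y.2.1
  · exfalso
    have hf1 : f (y.1.1+1) = 1 := f_one_of_gt H _ hgt hjn
    omega

/-- the sufficiency direction -/
theorem sufficiency :
    ∃ (φ : Matrix (Σ i : Fin m, Fin (c (i.1 + 1))) (Σ j : Fin n, Fin (f (j.1 + 1))) K)
      (ψ : Matrix (Σ i : Fin m, Fin (c (i.1 + 1) - 1)) (Σ j : Fin n, Fin (f (j.1 + 1) - 1)) K),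
        Function.Injective φ.mulVecLin ∧ Function.Injective ψ.mulVecLin ∧
        JsumA K m c * φ = ψ * JsumA K n f ∧ JsumB K m c * φ = ψ * JsumB K n f := by
  refine ⟨bigPhi m n c f K, bigPsi m n c f K, ?_, ?_, bigA H.hc_pos, bigB⟩
  · apply (injective_iff_map_eq_zero _).mpr
    intro x hx0
    apply phiInj H x
    intro z
    exact congrFun hx0 z
  · apply (injective_iff_map_eq_zero _).mpr
    intro x hx0
    apply psiInj H x
    intro z
    exact congrFun hx0 z

end Zip

end Struct

end Sufficiency

end KronAux

theorem preinjective_subrep_iff (K : Type*) [Field K] [IsAlgClosed K]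
    (m n : ℕ) (c f : ℕ → ℕ)
    (hc_pos : ∀ j, 1 ≤ j → j ≤ m → 1 ≤ c j)
    (hc_mono : ∀ i j, 1 ≤ i → i ≤ j → j ≤ m → c j ≤ c i)
    (hc_zero : ∀ j, m < j → c j = 0)
    (hf_pos : ∀ j, 1 ≤ j → j ≤ n → 1 ≤ f j)
    (hf_mono : ∀ i j, 1 ≤ i → i ≤ j → j ≤ n → f j ≤ f i)
    (hf_zero : ∀ j, n < j → f j = 0)
    (u v : ℕ → ℕ) (hv0 : v 0 = 0)
    (hu : ∀ l, 1 ≤ l → u l =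
      ((Finset.Icc 1 m).filter (fun j => f (v (l - 1) + 1) < c j)).sup id)
    (hv : ∀ l, 1 ≤ l → v l =
      ((Finset.Icc 1 n).filter (fun i => c (u l + 1) ≤ f i)).sup id)
    (w : ℕ) (hw1 : 1 ≤ w) (hwu : u w = m) (hwmin : ∀ l, 1 ≤ l → l < w → u l ≠ m) :
    (∃ (φ : Matrix (Σ i : Fin m, Fin (c (i.1 + 1))) (Σ j : Fin n, Fin (f (j.1 + 1))) K)
       (ψ : Matrix (Σ i : Fin m, Fin (c (i.1 + 1) - 1)) (Σ j : Fin n, Fin (f (j.1 + 1) - 1)) K),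
        Function.Injective φ.mulVecLin ∧ Function.Injective ψ.mulVecLin ∧
        JsumA K m c * φ = ψ * JsumA K n f ∧ JsumB K m c * φ = ψ * JsumB K n f) ↔
    (v (w - 1) = n ∧ v w = n ∧ ∀ i, i + 2 ≤ w →
      (∑ j ∈ Finset.Icc (v i + 1) (v (w - 1)), f j ≤
        ∑ j ∈ Finset.Icc (u (i + 1) + 1) (u w), c j) ∧
      (∑ j ∈ Finset.Icc (v i + 1) (v (w - 1)), (f j - 1) ≤
        ∑ j ∈ Finset.Icc (u (i + 1) + 1) (u w), (c j - 1))) := by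
  constructor
  · rintro ⟨φ, ψ, hφ, hψ, hA, hB⟩
    exact KronAux.necessity m n c f hc_pos hc_mono hc_zero hf_pos hf_mono hf_zero
      u v hv0 hu hv w hw1 hwu hwmin φ ψ hφ hψ hA hB
  · rintro ⟨h1, _h2, h3⟩
    have H : KronAux.Hyps m n c f u v w :=
      ⟨hc_pos, hc_mono, hc_zero, hf_pos, hf_mono, hf_zero, hv0, hu, hv, hw1, hwu, h1,
        fun i hi => by have := (h3 i hi).1; rwa [h1, hwu] at this,
        fun i hi => by have := (h3 i hi).2; rwa [h1, hwu] at this⟩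
    exact KronAux.sufficiency H
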